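/- Let G₁ and G₂ be finitely presented groups such that H¹(G₁, ℂ) ≠ 0 and H¹(G₂, ℂ) ≠ 0 (equivalently, both have positive first Betti number). Then for every character ρ : G₁ ∗ G₂ → ℂ* of the free product G₁ ∗ G₂, the first group cohomology H¹(G₁ ∗ G₂, ℂ_ρ) is nonzero. In other words, the first characteristic variety V₁(G₁ ∗ G₂) is the whole character group Hom(G₁ ∗ G₂, ℂ*). -/

import Mathlib

/-- The rank-one representation `ℂ_ρ` of `G` determined by a character `ρ : G → ℂ*`:
`g` acts on `ℂ` as multiplication by `ρ(g)`. -/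
def charRep {G : Type} [Group G] (ρ : G →* ℂˣ) : Representation ℂ G ℂ :=
  (Algebra.lmul ℂ ℂ).toRingHom.toMonoidHom.comp ((Units.coeHom ℂ).comp ρ)

/-- A group is finitely presented if it is isomorphic to the quotient of a finitely generated
free group by the normal closure of finitely many relators. -/
def FinitelyPresentedGroup (G : Type*) [Group G] : Prop :=
  ∃ (n : ℕ) (rels : Finset (FreeGroup (Fin n))),
    Nonempty (PresentedGroup (rels : Set (FreeGroup (Fin n))) ≃* G)

namespace Stmt5Aux

open groupCohomology

noncomputable section

theorem charRep_apply {G : Type} [Group G] (ρ : G →* ℂˣ) (g : G) (x : ℂ) :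
    charRep ρ g x = (ρ g : ℂ) * x := rfl

/-- `AddAut ℂ → MulAut (Multiplicative ℂ)` as a monoid hom. -/
def addAutToMulAut : Multiplicative (AddAut ℂ) →* MulAut (Multiplicative ℂ) where
  toFun f := AddEquiv.toMultiplicative (Multiplicative.toAdd f)
  map_one' := MulEquiv.ext fun _ => rfl
  map_mul' _ _ := MulEquiv.ext fun _ => rfl

variable {G₁ G₂ : Type} [Group G₁] [Group G₂]

/-- The action of the coproduct on `Multiplicative ℂ` induced by a character. -/
def charAut (ρ : Monoid.Coprod G₁ G₂ →* ℂˣ) :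
    Monoid.Coprod G₁ G₂ →* MulAut (Multiplicative ℂ) :=
  addAutToMulAut.comp ((DistribMulAction.toAddAut ℂˣ ℂ).comp ρ)

theorem charAut_apply (ρ : Monoid.Coprod G₁ G₂ →* ℂˣ) (w : Monoid.Coprod G₁ G₂)
    (x : Multiplicative ℂ) :
    charAut ρ w x = Multiplicative.ofAdd ((ρ w : ℂ) * x.toAdd) := rfl

/-- Gluing two cocycles into a cocycle on the free product. -/
theorem exists_oneCocycle (ρ : Monoid.Coprod G₁ G₂ →* ℂˣ) (f₁ : G₁ → ℂ) (f₂ : G₂ → ℂ)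
    (hc₁ : ∀ g h : G₁, f₁ (g * h) = (ρ (Monoid.Coprod.inl g) : ℂ) * f₁ h + f₁ g)
    (hc₂ : ∀ g h : G₂, f₂ (g * h) = (ρ (Monoid.Coprod.inr g) : ℂ) * f₂ h + f₂ g) :
    ∃ F ∈ cocycles₁ (Rep.of (charRep ρ)),
      (∀ g, F (Monoid.Coprod.inl g) = f₁ g) ∧ ∀ h, F (Monoid.Coprod.inr h) = f₂ h := by
  have hf₁1 : f₁ 1 = 0 := by
    have := hc₁ 1 1
    simp only [mul_one, map_one, Units.val_one, one_mul] at this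
    linear_combination -this
  have hf₂1 : f₂ 1 = 0 := by
    have := hc₂ 1 1
    simp only [mul_one, map_one, Units.val_one, one_mul] at this
    linear_combination -this
  let Φ₁ : G₁ →* Multiplicative ℂ ⋊[charAut ρ] Monoid.Coprod G₁ G₂ :=
  { toFun := fun g => ⟨Multiplicative.ofAdd (f₁ g), Monoid.Coprod.inl g⟩
    map_one' := by
      refine SemidirectProduct.ext ?_ ?_ <;> simp [hf₁1]
    map_mul' := fun g h => by
      refine SemidirectProduct.ext ?_ ?_
      · show Multiplicative.ofAdd (f₁ (g * h)) =
          Multiplicative.ofAdd (f₁ g) * charAut ρ (Monoid.Coprod.inl g) (Multiplicative.ofAdd (f₁ h))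
        rw [charAut_apply, hc₁]
        simp [← ofAdd_add, add_comm]
      · exact map_mul _ g h }
  let Φ₂ : G₂ →* Multiplicative ℂ ⋊[charAut ρ] Monoid.Coprod G₁ G₂ :=
  { toFun := fun g => ⟨Multiplicative.ofAdd (f₂ g), Monoid.Coprod.inr g⟩
    map_one' := by
      refine SemidirectProduct.ext ?_ ?_ <;> simp [hf₂1]
    map_mul' := fun g h => by
      refine SemidirectProduct.ext ?_ ?_
      · show Multiplicative.ofAdd (f₂ (g * h)) =
          Multiplicative.ofAdd (f₂ g) * charAut ρ (Monoid.Coprod.inr g) (Multiplicative.ofAdd (f₂ h))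
        rw [charAut_apply, hc₂]
        simp [← ofAdd_add, add_comm]
      · exact map_mul _ g h }
  let Φ := Monoid.Coprod.lift Φ₁ Φ₂
  have hright : ∀ w, (Φ w).right = w := by
    have h : SemidirectProduct.rightHom.comp Φ = MonoidHom.id (Monoid.Coprod G₁ G₂) :=
      Monoid.Coprod.hom_ext
        (by ext g; simp [Φ, Φ₁, SemidirectProduct.rightHom])
        (by ext g; simp [Φ, Φ₂, SemidirectProduct.rightHom])
    intro w
    exact DFunLike.congr_fun h w
  refine ⟨fun w => Multiplicative.toAdd (Φ w).left, ?_, ?_, ?_⟩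
  · rw [mem_cocycles₁_iff]
    intro g h
    rw [map_mul Φ]
    show Multiplicative.toAdd ((Φ g).left * charAut ρ (Φ g).right (Φ h).left) = _
    rw [hright]
    show Multiplicative.toAdd ((Φ g).left * Multiplicative.ofAdd ((ρ g : ℂ) *
      Multiplicative.toAdd (Φ h).left)) = _
    rw [toAdd_mul, toAdd_ofAdd]
    show _ = charRep ρ g (Multiplicative.toAdd (Φ h).left) + Multiplicative.toAdd (Φ g).left
    rw [charRep_apply, add_comm]
  · intro g
    show Multiplicative.toAdd (Φ (Monoid.Coprod.inl g)).left = f₁ g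
    rw [show Φ (Monoid.Coprod.inl g) = Φ₁ g from Monoid.Coprod.lift_apply_inl Φ₁ Φ₂ g]
    rfl
  · intro h
    show Multiplicative.toAdd (Φ (Monoid.Coprod.inr h)).left = f₂ h
    rw [show Φ (Monoid.Coprod.inr h) = Φ₂ h from Monoid.Coprod.lift_apply_inr Φ₁ Φ₂ h]
    rfl

theorem exists_ne_zero_hom (G : Type) [Group G]
    (hb : Nontrivial (groupCohomology (Rep.trivial ℂ G ℂ) 1)) :
    ∃ φ : Additive G →+ ℂ, φ ≠ 0 := by
  haveI := hb
  haveI h1 : Nontrivial (H1 (Rep.trivial ℂ G ℂ)) :=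
    hb
  haveI h2 : Nontrivial (Additive G →+ ℂ) :=
    (H1IsoOfIsTrivial (Rep.trivial ℂ G ℂ)).toLinearEquiv.symm.toEquiv.nontrivial
  exact exists_ne 0

theorem nontrivial_of_cocycle_not_coboundary {G : Type} [Group G] (ρ : G →* ℂˣ)
    (F : cocycles₁ (Rep.of (charRep ρ))) (hF : ⇑F ∉ coboundaries₁ (Rep.of (charRep ρ))) :
    Nontrivial (groupCohomology (Rep.of (charRep ρ)) 1) := by
  haveI h1 : Nontrivial (H1 (Rep.of (charRep ρ))) := by
    refine ⟨H1π _ F, 0, fun h => hF ?_⟩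
    rwa [H1π_eq_zero_iff] at h
  haveI h2 : Nontrivial ((ModuleCat.of ℂ (H1 (Rep.of (charRep ρ)))) : Type) := h1
  exact h1

end

end Stmt5Aux

open Stmt5Aux groupCohomology in
/-- If `G₁`, `G₂` are finitely presented groups with `H¹(G₁,ℂ) ≠ 0` and
`H¹(G₂,ℂ) ≠ 0`, then for every character `ρ : G₁ ∗ G₂ → ℂ*` of the free product, the twisted
cohomology `H¹(G₁ ∗ G₂, ℂ_ρ)` is nonzero; that is, `V₁(G₁ ∗ G₂)` is the full character group. -/
theorem stmt_5 (G₁ G₂ : Type) [Group G₁] [Group G₂]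
    (h₁ : FinitelyPresentedGroup G₁) (h₂ : FinitelyPresentedGroup G₂)
    (hb₁ : Nontrivial (groupCohomology (Rep.trivial ℂ G₁ ℂ) 1))
    (hb₂ : Nontrivial (groupCohomology (Rep.trivial ℂ G₂ ℂ) 1))
    (ρ : Monoid.Coprod G₁ G₂ →* ℂˣ) :
    Nontrivial (groupCohomology (Rep.of (charRep ρ)) 1) := by
  by_cases hl : ∀ g : G₁, ρ (Monoid.Coprod.inl g) = 1
  · obtain ⟨φ, hφ⟩ := exists_ne_zero_hom G₁ hb₁
    obtain ⟨F, hF, hFl, _⟩ := exists_oneCocycle ρ (fun g => φ (Additive.ofMul g)) (fun _ => 0)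
      (fun g h => by simp [hl g, ofMul_mul, map_add, add_comm]) (fun g h => by simp)
    refine nontrivial_of_cocycle_not_coboundary ρ ⟨F, hF⟩ fun hmem => ?_
    obtain ⟨x, key⟩ : ∃ x : ℂ, ∀ w, (ρ w : ℂ) * x - x = F w := by
      obtain ⟨x, hx⟩ := hmem
      exact ⟨x, fun w => congrFun hx w⟩
    refine hφ (AddMonoidHom.ext fun g => ?_)
    have hw := key (Monoid.Coprod.inl g.toMul)
    rw [hl, hFl] at hw
    simpa using hw.symm
  · push_neg at hl
    obtain ⟨g₀, hg₀⟩ := hl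
    by_cases hr : ∀ h : G₂, ρ (Monoid.Coprod.inr h) = 1
    · obtain ⟨φ, hφ⟩ := exists_ne_zero_hom G₂ hb₂
      obtain ⟨F, hF, _, hFr⟩ := exists_oneCocycle ρ (fun _ => 0) (fun g => φ (Additive.ofMul g))
        (fun g h => by simp) (fun g h => by simp [hr g, ofMul_mul, map_add, add_comm])
      refine nontrivial_of_cocycle_not_coboundary ρ ⟨F, hF⟩ fun hmem => ?_
      obtain ⟨x, key⟩ : ∃ x : ℂ, ∀ w, (ρ w : ℂ) * x - x = F w := by
        obtain ⟨x, hx⟩ := hmem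
        exact ⟨x, fun w => congrFun hx w⟩
      refine hφ (AddMonoidHom.ext fun g => ?_)
      have hw := key (Monoid.Coprod.inr g.toMul)
      rw [hr, hFr] at hw
      simpa using hw.symm
    · push_neg at hr
      obtain ⟨h₀, hh₀⟩ := hr
      obtain ⟨F, hF, hFl, hFr⟩ := exists_oneCocycle ρ
        (fun g => (ρ (Monoid.Coprod.inl g) : ℂ) - 1) (fun _ => 0)
        (fun g h => by push_cast [map_mul]; ring) (fun g h => by simp)
      refine nontrivial_of_cocycle_not_coboundary ρ ⟨F, hF⟩ fun hmem => ?_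
      obtain ⟨x, key⟩ : ∃ x : ℂ, ∀ w, (ρ w : ℂ) * x - x = F w := by
        obtain ⟨x, hx⟩ := hmem
        exact ⟨x, fun w => congrFun hx w⟩
      have hx1 : x = 1 := by
        have h1 := key (Monoid.Coprod.inl g₀)
        rw [hFl] at h1
        have h2 : ((ρ (Monoid.Coprod.inl g₀) : ℂ) - 1) * (x - 1) = 0 := by linear_combination h1
        have h3 : (ρ (Monoid.Coprod.inl g₀) : ℂ) - 1 ≠ 0 := fun h =>
          hg₀ (Units.ext (by simpa [sub_eq_zero] using h))
        exact sub_eq_zero.mp ((mul_eq_zero.mp h2).resolve_left h3)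
      have h4 := key (Monoid.Coprod.inr h₀)
      rw [hFr, hx1, mul_one, sub_eq_zero] at h4
      exact hh₀ (Units.ext (by simpa using h4))
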